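/- Let n ≥ 1, let A be a finite linearly ordered alphabet, and let X ⊆ A^n be stable under the symmetric group S_n acting on positions, i.e., if (w_1,…,w_n) ∈ X then (w_{σ(1)},…,w_{σ(n)}) ∈ X for every permutation σ of {1,…,n}. Then the triple (X, X^maj(t), C) exhibits the cyclic sieving phenomenon, where C is the cyclic group of order n acting on X by cyclic shifts. -/

import Mathlib

/-- The (leftward) cyclic shift on words of length `n`:
`c(w₁,…,wₙ) = (w₂,…,wₙ,w₁)`. -/
def cshift {A : Type*} {n : ℕ} (w : Fin n → A) : Fin n → A :=
  fun i => w ⟨((i : ℕ) + 1) % n, Nat.mod_lt _ i.pos⟩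

/-- The major index of a word: `maj w = Σ_{1 ≤ i ≤ n-1, w_i > w_{i+1}} i`
(here positions are 0-indexed, so position `i : Fin n` is the `(i+1)`-st letter). -/
def majIdx {A : Type*} [LinearOrder A] {n : ℕ} (w : Fin n → A) : ℕ :=
  ∑ i : Fin n,
    if h : (i : ℕ) + 1 < n then (if w ⟨(i : ℕ) + 1, h⟩ < w i then (i : ℕ) + 1 else 0) else 0

/-- The number of cyclic descents of a word, `cdes w = #{i : w_i > w_{i+1}}`
with indices read cyclically (`w_{n+1} := w_1`). -/
def cdes {A : Type*} [LinearOrder A] {n : ℕ} (w : Fin n → A) : ℕ :=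
  (Finset.univ.filter fun i : Fin n =>
    w ⟨((i : ℕ) + 1) % n, Nat.mod_lt _ i.pos⟩ < w i).card

/-- The inversion number of a word: `inv w = #{(i,j) : i < j, w_i > w_j}`. -/
def invNum {A : Type*} [LinearOrder A] {n : ℕ} (w : Fin n → A) : ℕ :=
  (Finset.univ.filter fun p : Fin n × Fin n => p.1 < p.2 ∧ w p.2 < w p.1).card

/-- The Hamming weight of a binary word: the number of ones. -/
def wt {n : ℕ} (w : Fin n → Bool) : ℕ :=
  (Finset.univ.filter fun i => w i = true).card

/-- The triple `(X, Σ_{x ∈ X} t^{stat x}, C)` exhibits the cyclic sieving phenomenon,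
where `C` is the cyclic group of order `n` generated by the cyclic shift `c` acting on `X`:
for every `d`, the number of fixed points of `c^d` on `X` equals the evaluation of
`Σ_{x ∈ X} t^{stat x}` at `t = ζ^d`, with `ζ = exp(2πi/n)`. -/
def exhibitsCSP {A : Type*} [DecidableEq A] {n : ℕ} (X : Finset (Fin n → A))
    (stat : (Fin n → A) → ℕ) : Prop :=
  ∀ d : ℕ,
    ((X.filter fun v => cshift^[d] v = v).card : ℂ) =
      ∑ v ∈ X, Complex.exp (2 * (Real.pi : ℂ) * Complex.I / n) ^ (d * stat v)

namespace CSPaux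

variable {A : Type*} [LinearOrder A] {n : ℕ}

/-- content of a word -/
def cont (w : Fin n → A) : Multiset A := ∑ i : Fin n, {w i}

lemma cont_comp_equiv (w : Fin n → A) (σ : Equiv.Perm (Fin n)) :
    cont (fun i => w (σ i)) = cont w := by
  unfold cont
  exact Equiv.sum_comp σ (fun i => ({w i} : Multiset A))

lemma cshift_iterate (w : Fin n → A) (k : ℕ) (i : Fin n) :
    cshift^[k] w i = w ⟨((i : ℕ) + k) % n, Nat.mod_lt _ i.pos⟩ := by
  induction k generalizing w with
  | zero => simp [Nat.mod_eq_of_lt i.isLt]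
  | succ k ih =>
      rw [Function.iterate_succ, Function.comp_apply, ih (cshift w)]
      show w _ = w _
      congr 1
      ext
      show (((i : ℕ) + k) % n + 1) % n = ((i : ℕ) + (k + 1)) % n
      rw [Nat.mod_add_mod, add_assoc]

end CSPaux

namespace CSPaux2
set_option linter.unusedSectionVars false

variable {A : Type*} [LinearOrder A] {n : ℕ}

/-- cyclic descent predicate -/
def cdesP (w : Fin n → A) (i : Fin n) : Prop :=
  w ⟨((i : ℕ) + 1) % n, Nat.mod_lt _ i.pos⟩ < w i

instance (w : Fin n → A) : DecidablePred (cdesP w) := fun i => by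
  unfold cdesP; infer_instance

lemma cdes_eq_sum (w : Fin n → A) :
    cdes w = ∑ j : Fin n, if cdesP w j then 1 else 0 := by
  rw [cdes, Finset.card_filter]
  rfl

section wv
variable (hpos : 0 < n)

/-- word extended periodically to all of ℕ -/
def wv (w : Fin n → A) (k : ℕ) : A := w ⟨k % n, Nat.mod_lt _ hpos⟩

lemma wv_eq (w : Fin n → A) (i : Fin n) : w i = wv hpos w i := by
  unfold wv; congr 1; ext; exact (Nat.mod_eq_of_lt i.isLt).symm

lemma wv_mod (w : Fin n → A) (k : ℕ) : wv hpos w (k % n) = wv hpos w k := by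
  unfold wv; congr 2; exact Nat.mod_mod_of_dvd _ dvd_rfl

lemma wv_add_n (w : Fin n → A) (k : ℕ) : wv hpos w (k + n) = wv hpos w k := by
  unfold wv; congr 2; exact Nat.add_mod_right k n

lemma cshift_apply (w : Fin n → A) (i : Fin n) :
    cshift w i = wv hpos w ((i : ℕ) + 1) := rfl

lemma cdesP_iff (w : Fin n → A) (i : Fin n) :
    cdesP w i ↔ wv hpos w ((i : ℕ) + 1) < wv hpos w i := by
  unfold cdesP wv
  have hi : (⟨(i : ℕ) % n, Nat.mod_lt _ hpos⟩ : Fin n) = i := Fin.ext (Nat.mod_eq_of_lt i.isLt)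
  rw [hi]

end wv

end CSPaux2

namespace CSPaux2
set_option linter.unusedSectionVars false
variable {A : Type*} [LinearOrder A] {n : ℕ}

lemma val_finRotate (hpos : 0 < n) (i : Fin n) :
    ((finRotate n i : Fin n) : ℕ) = ((i : ℕ) + 1) % n := by
  obtain ⟨m, rfl⟩ : ∃ m, n = m + 1 := ⟨n - 1, by omega⟩
  rw [finRotate_succ_apply, Fin.add_def]
  show ((i : ℕ) + 1 % (m + 1)) % (m + 1) = _
  rw [Nat.add_mod_mod]

lemma maj_cshift_eq_sum (hpos : 0 < n) (w : Fin n → A) :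
    majIdx (cshift w) = ∑ j : Fin n, if cdesP w j then (j : ℕ) else 0 := by
  rw [← Equiv.sum_comp (finRotate n) (fun j : Fin n => if cdesP w j then (j : ℕ) else 0), majIdx]
  apply Finset.sum_congr rfl
  intro i _
  have hrot : ((finRotate n i : Fin n) : ℕ) = ((i : ℕ) + 1) % n := val_finRotate hpos i
  by_cases h : (i : ℕ) + 1 < n
  · rw [dif_pos h]
    have hv : ((finRotate n i : Fin n) : ℕ) = (i : ℕ) + 1 := by
      rw [hrot, Nat.mod_eq_of_lt h]
    simp only [cdesP_iff hpos, hv, cshift_apply hpos]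
  · rw [dif_neg h]
    have hv : ((finRotate n i : Fin n) : ℕ) = 0 := by
      rw [hrot]
      have : (i : ℕ) + 1 = n := by have := i.isLt; omega
      rw [this, Nat.mod_self]
    rw [hv]
    simp

lemma maj_plus_wrap (hpos : 0 < n) (w : Fin n → A) :
    majIdx w + (if cdesP w ⟨n - 1, by omega⟩ then n else 0)
      = ∑ j : Fin n, if cdesP w j then (j : ℕ) + 1 else 0 := by
  obtain ⟨m, rfl⟩ : ∃ m, n = m + 1 := ⟨n - 1, by omega⟩
  rw [majIdx, Fin.sum_univ_castSucc, Fin.sum_univ_castSucc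
    (f := fun j : Fin (m + 1) => if cdesP w j then (j : ℕ) + 1 else 0)]
  have hlast : ¬ ((Fin.last m : ℕ) + 1 < m + 1) := by simp
  rw [dif_neg hlast]
  have hL : (Fin.last m : Fin (m+1)) = ⟨m + 1 - 1, by omega⟩ := by
    ext; simp
  rw [hL] at *
  have hmain : ∀ i : Fin m,
      (if h : ((Fin.castSucc i : Fin (m+1)) : ℕ) + 1 < m + 1 then
        (if w ⟨((Fin.castSucc i : Fin (m+1)) : ℕ) + 1, h⟩ < w (Fin.castSucc i) then
          ((Fin.castSucc i : Fin (m+1)) : ℕ) + 1 else 0) else 0)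
      = (if cdesP w (Fin.castSucc i) then ((Fin.castSucc i : Fin (m+1)) : ℕ) + 1 else 0) := by
    intro i
    have hi : ((Fin.castSucc i : Fin (m+1)) : ℕ) + 1 < m + 1 := by
      simp only [Fin.coe_castSucc]; omega
    rw [dif_pos hi]
    have : cdesP w (Fin.castSucc i) ↔
        w ⟨((Fin.castSucc i : Fin (m+1)) : ℕ) + 1, hi⟩ < w (Fin.castSucc i) := by
      unfold cdesP
      have hmod : (((Fin.castSucc i : Fin (m+1)) : ℕ) + 1) % (m + 1)
          = ((Fin.castSucc i : Fin (m+1)) : ℕ) + 1 := Nat.mod_eq_of_lt hi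
      constructor
      · intro hlt
        convert hlt using 2
        ext
        exact hmod.symm
      · intro hlt
        convert hlt using 2
        ext
        exact hmod
    exact (if_congr this.symm rfl rfl)
  rw [Finset.sum_congr rfl (fun i _ => hmain i)]
  rfl

lemma rotation_identity (hpos : 0 < n) (w : Fin n → A) :
    majIdx w + (if cdesP w ⟨n - 1, by omega⟩ then n else 0)
      = majIdx (cshift w) + cdes w := by
  rw [maj_plus_wrap hpos w, maj_cshift_eq_sum hpos w, cdes_eq_sum w, ← Finset.sum_add_distrib]
  apply Finset.sum_congr rfl
  intro j _
  by_cases h : cdesP w j <;> simp [h]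

lemma rotation_omega (hpos : 0 < n) (w : Fin n → A) {ω : ℂ} (hω : ω ^ n = 1) :
    ω ^ majIdx (cshift w) * ω ^ cdes w = ω ^ majIdx w := by
  have h := rotation_identity hpos w
  have h2 : ω ^ (majIdx w + (if cdesP w ⟨n - 1, by omega⟩ then n else 0))
      = ω ^ (majIdx (cshift w) + cdes w) := by rw [h]
  rw [pow_add, pow_add] at h2
  have h3 : ω ^ (if cdesP w ⟨n - 1, by omega⟩ then n else 0) = 1 := by
    split_ifs <;> simp [hω]
  rw [h3, mul_one] at h2
  exact h2.symm

end CSPaux2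

namespace CSPaux2
set_option linter.unusedSectionVars false
variable {A : Type*} [LinearOrder A] {n : ℕ}
open CSPaux

lemma wv_cshift (hpos : 0 < n) (w : Fin n → A) (k : ℕ) :
    wv hpos (cshift w) k = wv hpos w (k + 1) := by
  show w _ = w _
  congr 1
  ext
  show ((k % n) + 1) % n = (k + 1) % n
  rw [Nat.mod_add_mod]

lemma wv_mod_add (hpos : 0 < n) (w : Fin n → A) (a b : ℕ) :
    wv hpos w (a % n + b) = wv hpos w (a + b) := by
  unfold wv; congr 2; exact Nat.mod_add_mod a n b

lemma cdesP_cshift (hpos : 0 < n) (w : Fin n → A) (i : Fin n) :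
    cdesP (cshift w) i ↔ cdesP w (finRotate n i) := by
  rw [cdesP_iff hpos, cdesP_iff hpos, wv_cshift hpos, wv_cshift hpos,
    val_finRotate hpos, wv_mod_add hpos, wv_mod hpos]

lemma cdes_cshift (hpos : 0 < n) (w : Fin n → A) : cdes (cshift w) = cdes w := by
  rw [cdes_eq_sum, cdes_eq_sum,
    ← Equiv.sum_comp (finRotate n) (fun j : Fin n => if cdesP w j then 1 else 0)]
  exact Finset.sum_congr rfl fun i _ => if_congr (cdesP_cshift hpos w i) rfl rfl

lemma cdes_iterate (hpos : 0 < n) (w : Fin n → A) (k : ℕ) :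
    cdes (cshift^[k] w) = cdes w := by
  induction k with
  | zero => rfl
  | succ k ih => rw [Function.iterate_succ_apply', cdes_cshift hpos, ih]

lemma cshift_eq_comp (hpos : 0 < n) (w : Fin n → A) :
    cshift w = fun i => w (finRotate n i) := by
  funext i
  show w _ = w _
  congr 1
  ext
  rw [val_finRotate hpos]

lemma cont_cshift (hpos : 0 < n) (w : Fin n → A) : cont (cshift w) = cont w := by
  rw [cshift_eq_comp hpos, cont_comp_equiv]

lemma cshift_pow_n (hpos : 0 < n) (w : Fin n → A) : cshift^[n] w = w := by
  funext i
  rw [cshift_iterate]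
  congr 1
  ext
  show ((i : ℕ) + n) % n = (i : ℕ)
  rw [Nat.add_mod_right, Nat.mod_eq_of_lt i.isLt]

/-- constant words -/
def IsConst (w : Fin n → A) : Prop := ∀ i j : Fin n, w i = w j

instance isConstDec (w : Fin n → A) : Decidable (IsConst w) := by
  unfold IsConst; infer_instance

lemma IsConst.maj_eq_zero {w : Fin n → A} (h : IsConst w) : majIdx w = 0 := by
  rw [majIdx]
  apply Finset.sum_eq_zero
  intro i _
  split_ifs with h1 h2
  · exact absurd (h _ _ ▸ h2) (lt_irrefl _)
  · rfl
  · rfl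

lemma IsConst.cshift_fixed {w : Fin n → A} (h : IsConst w) : cshift w = w :=
  funext fun i => h _ _

lemma wv_succ_lt_of_all (hpos : 0 < n) (w : Fin n → A)
    (hall : ∀ i : Fin n, cdesP w i) (k : ℕ) : wv hpos w (k + 1) < wv hpos w k := by
  have h := (cdesP_iff hpos w ⟨k % n, Nat.mod_lt _ hpos⟩).mp (hall _)
  simpa [wv_mod_add hpos, wv_mod hpos] using h

lemma cdes_lt (hpos : 0 < n) (w : Fin n → A) : cdes w < n := by
  have hcard : cdes w = (Finset.univ.filter fun i : Fin n => cdesP w i).card := by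
    rw [cdes_eq_sum, Finset.card_filter]
  have hle : cdes w ≤ n := by
    rw [hcard]
    simpa using Finset.card_filter_le Finset.univ (fun i : Fin n => cdesP w i)
  rcases hle.lt_or_eq with h | h
  · exact h
  · exfalso
    have hfull : (Finset.univ.filter fun i : Fin n => cdesP w i) = Finset.univ := by
      apply Finset.eq_univ_of_card
      rw [← hcard, h]
      simp
    have hall : ∀ i : Fin n, cdesP w i := fun i =>
      (Finset.mem_filter.mp (by rw [hfull]; exact Finset.mem_univ i)).2
    have hchain : ∀ k : ℕ, 0 < k → wv hpos w k < wv hpos w 0 := by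
      intro k hk
      induction k with
      | zero => omega
      | succ k ih =>
          rcases Nat.eq_zero_or_pos k with rfl | hk'
          · exact wv_succ_lt_of_all hpos w hall 0
          · exact (wv_succ_lt_of_all hpos w hall k).trans (ih hk')
    have h1 : wv hpos w n < wv hpos w 0 := hchain n hpos
    have h2 : wv hpos w n = wv hpos w 0 := by
      have := wv_add_n hpos w 0
      simpa using this
    rw [h2] at h1
    exact lt_irrefl _ h1

lemma isConst_of_cdes_eq_zero (hpos : 0 < n) (w : Fin n → A) (h : cdes w = 0) :
    IsConst w := by
  have hnone : ∀ i : Fin n, ¬ cdesP w i := by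
    intro i hi
    have hcard : cdes w = (Finset.univ.filter fun i : Fin n => cdesP w i).card := by
      rw [cdes_eq_sum, Finset.card_filter]
    rw [hcard, Finset.card_eq_zero] at h
    have : i ∈ (Finset.univ.filter fun i : Fin n => cdesP w i) := by
      simp [hi]
    rw [h] at this
    exact absurd this (Finset.notMem_empty i)
  have hmono : ∀ k : ℕ, wv hpos w k ≤ wv hpos w (k + 1) := by
    intro k
    have h := hnone ⟨k % n, Nat.mod_lt _ hpos⟩
    rw [cdesP_iff hpos] at h
    push_neg at h
    simpa [wv_mod_add hpos, wv_mod hpos] using h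
  have hmono2 : ∀ j k : ℕ, j ≤ k → wv hpos w j ≤ wv hpos w k := by
    intro j k hjk
    induction k with
    | zero => simp_all
    | succ k ih =>
        rcases Nat.lt_or_ge j (k+1) with h' | h'
        · exact (ih (by omega)).trans (hmono k)
        · have : j = k + 1 := by omega
          subst this; rfl
  have hconstv : ∀ i : Fin n, w i = wv hpos w 0 := by
    intro i
    have h1 : wv hpos w 0 ≤ wv hpos w i := hmono2 0 i (Nat.zero_le _)
    have h2 : wv hpos w i ≤ wv hpos w n := hmono2 i n i.isLt.le
    have h3 : wv hpos w n = wv hpos w 0 := by simpa using wv_add_n hpos w 0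
    rw [wv_eq hpos w i]
    exact le_antisymm (h3 ▸ h2) h1
  intro i j
  rw [hconstv i, hconstv j]

lemma IsConst.cdes_eq_zero {w : Fin n → A} (h : IsConst w) : cdes w = 0 := by
  rw [cdes_eq_sum]
  apply Finset.sum_eq_zero
  intro i _
  have : ¬ cdesP w i := by
    unfold cdesP
    rw [h ⟨((i:ℕ)+1) % n, Nat.mod_lt _ i.pos⟩ i]
    exact lt_irrefl _
  simp [this]

end CSPaux2

namespace CSPaux2
set_option linter.unusedSectionVars false
variable {A : Type*} [LinearOrder A] {n : ℕ}
open CSPaux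

lemma sum_cshift_comp (hpos : 0 < n) (F : Finset (Fin n → A))
    (hF : ∀ w ∈ F, cshift w ∈ F) (f : (Fin n → A) → ℂ) :
    ∑ u ∈ F, f (cshift u) = ∑ u ∈ F, f u := by
  have hiter : ∀ k, ∀ w ∈ F, cshift^[k] w ∈ F := by
    intro k
    induction k with
    | zero => intro w hw; exact hw
    | succ k ih =>
        intro w hw
        rw [Function.iterate_succ_apply']
        exact hF _ (ih w hw)
  apply Finset.sum_nbij' (i := fun u => cshift u) (j := fun u => cshift^[n-1] u)
  · intro a ha; exact hF a ha
  · intro a ha; exact hiter (n-1) a ha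
  · intro a _
    rw [← Function.iterate_succ_apply cshift (n-1) a]
    have h : n - 1 + 1 = n := by omega
    rw [show (n-1).succ = n from h, cshift_pow_n hpos]
  · intro a _
    rw [← Function.iterate_succ_apply' cshift (n-1) a]
    have h : n - 1 + 1 = n := by omega
    rw [show (n-1).succ = n from h, cshift_pow_n hpos]
  · intro a _; rfl

lemma sum_cshift_iterate_comp (hpos : 0 < n) (F : Finset (Fin n → A))
    (hF : ∀ w ∈ F, cshift w ∈ F) (f : (Fin n → A) → ℂ) (k : ℕ) :
    ∑ u ∈ F, f (cshift^[k] u) = ∑ u ∈ F, f u := by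
  induction k with
  | zero => rfl
  | succ k ih =>
      have := sum_cshift_comp hpos F hF (fun u => f (cshift^[k] u))
      simp only [← Function.iterate_succ_apply] at this
      rw [this, ih]

/-- Key Lemma B : the orbit-averaged root-of-unity maj sum counts constants. -/
lemma lemmaB (hpos : 0 < n) {ω : ℂ} (hprim : IsPrimitiveRoot ω n)
    (F : Finset (Fin n → A)) (hF : ∀ w ∈ F, cshift w ∈ F) :
    ∑ u ∈ F, ω ^ majIdx u = ((F.filter IsConst).card : ℂ) := by
  have hω : ω ^ n = 1 := hprim.pow_eq_one
  have key : ∀ u : Fin n → A, ∑ k ∈ Finset.range n, ω ^ majIdx (cshift^[k] u)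
      = if IsConst u then (n : ℂ) else 0 := by
    intro u
    by_cases hc : IsConst u
    · rw [if_pos hc]
      have : ∀ k, cshift^[k] u = u := fun k => Function.iterate_fixed hc.cshift_fixed k
      simp [this, hc.maj_eq_zero]
    · rw [if_neg hc]
      set t : ℕ → ℂ := fun k => ω ^ majIdx (cshift^[k] u) with ht
      set y : ℂ := ω ^ cdes u with hy
      have hcd0 : cdes u ≠ 0 := fun h => hc (isConst_of_cdes_eq_zero hpos u h)
      have hcdlt : cdes u < n := cdes_lt hpos u
      have hy1 : y ≠ 1 := by
        rw [hy]
        exact hprim.pow_ne_one_of_pos_of_lt hcd0 hcdlt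
      have hstep : ∀ k, t (k + 1) * y = t k := by
        intro k
        have := rotation_omega hpos (cshift^[k] u) hω
        rw [cdes_iterate hpos u k] at this
        rw [ht, hy]
        simp only []
        rw [← Function.iterate_succ_apply' cshift k u] at this
        exact this
      have htn : t n = t 0 := by
        simp only [ht, cshift_pow_n hpos, Function.iterate_zero_apply]
      set S : ℂ := ∑ k ∈ Finset.range n, t k with hS
      have hshift : ∑ k ∈ Finset.range n, t (k + 1) = S := by
        have h1 : ∑ k ∈ Finset.range (n + 1), t k = S + t n := by
          rw [Finset.sum_range_succ]
        have h2 : ∑ k ∈ Finset.range (n + 1), t k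
            = (∑ k ∈ Finset.range n, t (k + 1)) + t 0 := Finset.sum_range_succ' t n
        rw [h1, htn] at h2
        linear_combination -h2
      have hSy : S = y * S := by
        calc S = ∑ k ∈ Finset.range n, t k := rfl
        _ = ∑ k ∈ Finset.range n, t (k + 1) * y := by
              exact Finset.sum_congr rfl fun k _ => (hstep k).symm
        _ = (∑ k ∈ Finset.range n, t (k + 1)) * y := by rw [Finset.sum_mul]
        _ = S * y := by rw [hshift]
        _ = y * S := mul_comm _ _
      have : (y - 1) * S = 0 := by linear_combination -hSy
      rcases mul_eq_zero.mp this with h | h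
      · exact absurd (by linear_combination h : y = 1) hy1
      · exact h
  have hswap : (n : ℂ) * ∑ u ∈ F, ω ^ majIdx u
      = ∑ u ∈ F, ∑ k ∈ Finset.range n, ω ^ majIdx (cshift^[k] u) := by
    rw [Finset.sum_comm]
    rw [Finset.sum_congr rfl (fun k _ =>
      sum_cshift_iterate_comp hpos F hF (fun u => ω ^ majIdx u) k)]
    rw [Finset.sum_const, Finset.card_range, nsmul_eq_mul]
  have hrhs : ∑ u ∈ F, (if IsConst u then (n : ℂ) else 0)
      = (n : ℂ) * ((F.filter IsConst).card : ℂ) := by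
    rw [Finset.sum_ite, Finset.sum_const_zero, add_zero, Finset.sum_const, nsmul_eq_mul]
    ring
  have hn0 : (n : ℂ) ≠ 0 := Nat.cast_ne_zero.mpr (by omega)
  apply mul_left_cancel₀ hn0
  rw [hswap, Finset.sum_congr rfl (fun u _ => key u), hrhs]

end CSPaux2

namespace CSPaux2
set_option linter.unusedSectionVars false
variable {A : Type*} [LinearOrder A] {n : ℕ}
open CSPaux

section blocks
variable {g ℓ : ℕ} (hgl : g * ℓ = n)

/-- index equiv for blocks -/
def bIdx (hgl : g * ℓ = n) : Fin g × Fin ℓ ≃ Fin n :=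
  finProdFinEquiv.trans (finCongr hgl)

lemma bIdx_val (b : Fin g) (r : Fin ℓ) :
    ((bIdx hgl (b, r) : Fin n) : ℕ) = (r : ℕ) + ℓ * (b : ℕ) := rfl

/-- the b-th block of a word -/
def blk (b : Fin g) (w : Fin n → A) : Fin ℓ → A := fun r => w (bIdx hgl (b, r))

lemma cont_eq_sum_blocks (w : Fin n → A) :
    cont w = ∑ b : Fin g, cont (blk hgl b w) := by
  unfold cont blk
  rw [← Equiv.sum_comp (bIdx hgl) (fun i : Fin n => ({w i} : Multiset A)),
    Fintype.sum_prod_type]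

lemma maj_term_eq {ω : ℂ} (hω : ω ^ ℓ = 1) (w : Fin n → A) (b : Fin g) (r : Fin ℓ) :
    ω ^ (if h : ((bIdx hgl (b, r) : Fin n) : ℕ) + 1 < n then
          (if w ⟨((bIdx hgl (b, r) : Fin n) : ℕ) + 1, h⟩ < w (bIdx hgl (b, r)) then
            ((bIdx hgl (b, r) : Fin n) : ℕ) + 1 else 0) else 0)
      = ω ^ (if h : (r : ℕ) + 1 < ℓ then
          (if blk hgl b w ⟨(r : ℕ) + 1, h⟩ < blk hgl b w r then (r : ℕ) + 1 else 0) else 0) := by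
  have hv : ((bIdx hgl (b, r) : Fin n) : ℕ) = (r : ℕ) + ℓ * (b : ℕ) := bIdx_val hgl b r
  by_cases hr : (r : ℕ) + 1 < ℓ
  · have hvn : ((bIdx hgl (b, r) : Fin n) : ℕ) + 1 < n := by
      rw [hv]
      have h5 : (r : ℕ) + ℓ * (b : ℕ) + 1 < ℓ * ((b : ℕ) + 1) := by
        rw [Nat.mul_succ]; omega
      exact lt_of_lt_of_le h5 (le_trans (Nat.mul_le_mul_left _ b.isLt)
        (le_of_eq (by rw [mul_comm]; exact hgl)))
    rw [dif_pos hvn, dif_pos hr]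
    have hidx : (⟨((bIdx hgl (b, r) : Fin n) : ℕ) + 1, hvn⟩ : Fin n)
        = bIdx hgl (b, ⟨(r : ℕ) + 1, hr⟩) := by
      ext
      rw [bIdx_val hgl b ⟨(r : ℕ) + 1, hr⟩]
      show ((bIdx hgl (b, r) : Fin n) : ℕ) + 1 = ((r : ℕ) + 1) + ℓ * (b : ℕ)
      rw [hv]; omega
    rw [hidx]
    have hcond : (w (bIdx hgl (b, ⟨(r : ℕ) + 1, hr⟩)) < w (bIdx hgl (b, r)))
        ↔ (blk hgl b w ⟨(r : ℕ) + 1, hr⟩ < blk hgl b w r) := Iff.rfl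
    rw [if_congr hcond rfl rfl]
    by_cases hlt : blk hgl b w ⟨(r : ℕ) + 1, hr⟩ < blk hgl b w r
    · rw [if_pos hlt, if_pos hlt, hv]
      have : (r : ℕ) + ℓ * (b : ℕ) + 1 = ((r : ℕ) + 1) + ℓ * (b : ℕ) := by omega
      rw [this, pow_add, pow_mul, hω, one_pow, mul_one]
    · rw [if_neg hlt, if_neg hlt]
  · rw [dif_neg hr]
    have hr' : (r : ℕ) = ℓ - 1 := by have := r.isLt; omega
    have hv1 : ((bIdx hgl (b, r) : Fin n) : ℕ) + 1 = ℓ * ((b : ℕ) + 1) := by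
      rw [hv, hr', Nat.mul_succ]
      have := r.pos
      omega
    by_cases hvn : ((bIdx hgl (b, r) : Fin n) : ℕ) + 1 < n
    · rw [dif_pos hvn]
      have hone : ω ^ (((bIdx hgl (b, r) : Fin n) : ℕ) + 1) = 1 := by
        rw [hv1, pow_mul, hω, one_pow]
      split_ifs with h
      · rw [hone]; rfl
      · rfl
    · rw [dif_neg hvn]

lemma maj_factor {ω : ℂ} (hω : ω ^ ℓ = 1) (w : Fin n → A) :
    ω ^ majIdx w = ∏ b : Fin g, ω ^ majIdx (blk hgl b w) := by
  have h1 : ω ^ majIdx w = ∏ i : Fin n, ω ^ (if h : (i : ℕ) + 1 < n then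
      (if w ⟨(i : ℕ) + 1, h⟩ < w i then (i : ℕ) + 1 else 0) else 0) := by
    rw [majIdx, Finset.prod_pow_eq_pow_sum]
  have h2 : ∀ b : Fin g, ω ^ majIdx (blk hgl b w) = ∏ r : Fin ℓ, ω ^ (if h : (r : ℕ) + 1 < ℓ then
      (if blk hgl b w ⟨(r : ℕ) + 1, h⟩ < blk hgl b w r then (r : ℕ) + 1 else 0) else 0) := by
    intro b
    rw [majIdx, Finset.prod_pow_eq_pow_sum]
  rw [h1, ← Equiv.prod_comp (bIdx hgl) (fun i : Fin n => ω ^ (if h : (i : ℕ) + 1 < n then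
      (if w ⟨(i : ℕ) + 1, h⟩ < w i then (i : ℕ) + 1 else 0) else 0)), Fintype.prod_prod_type]
  apply Finset.prod_congr rfl
  intro b _
  rw [h2 b]
  exact Finset.prod_congr rfl fun r _ => maj_term_eq hgl hω w b r

end blocks
end CSPaux2

namespace CSPaux2
set_option linter.unusedSectionVars false

/-- Lemma D: replacing the local weight by a fiber-equivalent one in tuple sums. -/
lemma tuple_sum_replace {W : Type*} [Fintype W] {M : Type*} [AddCommMonoid M] [DecidableEq M]
    (c : W → M) (f f' : W → ℂ)
    (hff' : ∀ μ : M, ∑ u ∈ Finset.univ.filter (fun u => c u = μ), f u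
        = ∑ u ∈ Finset.univ.filter (fun u => c u = μ), f' u) :
    ∀ (k : ℕ) (μ₀ m : M),
      (∑ U ∈ Finset.univ.filter (fun U : Fin k → W => μ₀ + ∑ b, c (U b) = m), ∏ b, f (U b))
        = ∑ U ∈ Finset.univ.filter (fun U : Fin k → W => μ₀ + ∑ b, c (U b) = m),
            ∏ b, f' (U b) := by
  intro k
  induction k with
  | zero =>
      intro μ₀ m
      exact Finset.sum_congr rfl fun U _ => by simp
  | succ k ih =>
      intro μ₀ m
      set T : (W → ℂ) → M → ℂ := fun h μ =>
        ∑ U ∈ Finset.univ.filter (fun U : Fin k → W => μ + ∑ b, c (U b) = m),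
          ∏ b, h (U b) with hT
      have step1 : ∀ h : W → ℂ,
          (∑ U ∈ Finset.univ.filter (fun U : Fin (k+1) → W => μ₀ + ∑ b, c (U b) = m),
            ∏ b, h (U b)) = ∑ u : W, h u * T h (μ₀ + c u) := by
        intro h
        rw [Finset.sum_filter, ← Equiv.sum_comp (Fin.consEquiv (fun _ : Fin (k+1) => W))
          (fun U : Fin (k+1) → W =>
            if μ₀ + ∑ b, c (U b) = m then ∏ b, h (U b) else 0), Fintype.sum_prod_type]
        apply Finset.sum_congr rfl
        intro u _
        rw [hT]
        simp only []
        rw [Finset.sum_filter, Finset.mul_sum]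
        apply Finset.sum_congr rfl
        intro V _
        have hcons : (Fin.consEquiv (fun _ : Fin (k+1) => W)) (u, V) = Fin.cons u V := rfl
        rw [hcons]
        have e1 : (∑ b : Fin (k+1), c ((Fin.cons u V : Fin (k+1) → W) b))
            = c u + ∑ b : Fin k, c (V b) := by
          rw [Fin.sum_univ_succ]; simp
        have e2 : (∏ b : Fin (k+1), h ((Fin.cons u V : Fin (k+1) → W) b))
            = h u * ∏ b : Fin k, h (V b) := by
          rw [Fin.prod_univ_succ]; simp
        rw [e1, e2, ← add_assoc]
        split_ifs with hcond
        · rfl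
        · rw [mul_zero]
      have step3 : ∀ h : W → ℂ,
          (∑ u : W, h u * T f' (μ₀ + c u))
            = ∑ μ ∈ Finset.univ.image c,
                (∑ u ∈ Finset.univ.filter (fun u => c u = μ), h u) * T f' (μ₀ + μ) := by
        intro h
        rw [← Finset.sum_fiberwise_of_maps_to (g := c) (t := Finset.univ.image c)
          (fun u _ => Finset.mem_image_of_mem c (Finset.mem_univ u))
          (fun u => h u * T f' (μ₀ + c u))]
        apply Finset.sum_congr rfl
        intro μ _
        rw [Finset.sum_mul]
        apply Finset.sum_congr rfl
        intro u hu
        rw [(Finset.mem_filter.mp hu).2]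
      calc (∑ U ∈ Finset.univ.filter (fun U : Fin (k+1) → W => μ₀ + ∑ b, c (U b) = m),
            ∏ b, f (U b))
          = ∑ u : W, f u * T f (μ₀ + c u) := step1 f
        _ = ∑ u : W, f u * T f' (μ₀ + c u) := by
            apply Finset.sum_congr rfl
            intro u _
            rw [hT]
            simp only []
            rw [ih (μ₀ + c u) m]
        _ = ∑ μ ∈ Finset.univ.image c,
              (∑ u ∈ Finset.univ.filter (fun u => c u = μ), f u) * T f' (μ₀ + μ) := step3 f
        _ = ∑ μ ∈ Finset.univ.image c,
              (∑ u ∈ Finset.univ.filter (fun u => c u = μ), f' u) * T f' (μ₀ + μ) := by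
            exact Finset.sum_congr rfl fun μ _ => by rw [hff' μ]
        _ = ∑ u : W, f' u * T f' (μ₀ + c u) := (step3 f').symm
        _ = _ := (step1 f').symm

end CSPaux2

namespace CSPaux2
set_option linter.unusedSectionVars false
variable {A : Type*} [LinearOrder A] [Fintype A] {n : ℕ}
open CSPaux

section blocks2
variable {g ℓ : ℕ} (hgl : g * ℓ = n)

lemma blk_reassemble (U : Fin g → Fin ℓ → A) (b : Fin g) :
    blk hgl b (fun i => U ((bIdx hgl).symm i).1 ((bIdx hgl).symm i).2) = U b := by
  funext r
  show U ((bIdx hgl).symm (bIdx hgl (b, r))).1 ((bIdx hgl).symm (bIdx hgl (b, r))).2 = U b r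
  rw [Equiv.symm_apply_apply]

include hgl in
lemma class_sum_eq_tuple_sum {ω : ℂ} (hω : ω ^ ℓ = 1) (m : Multiset A) :
    (∑ w ∈ Finset.univ.filter (fun w : Fin n → A => cont w = m), ω ^ majIdx w)
      = ∑ U ∈ Finset.univ.filter
          (fun U : Fin g → (Fin ℓ → A) => (∑ b, cont (U b)) = m),
          ∏ b, ω ^ majIdx (U b) := by
  apply Finset.sum_nbij' (i := fun w => fun b => blk hgl b w)
    (j := fun U => fun i => U ((bIdx hgl).symm i).1 ((bIdx hgl).symm i).2)
  · intro w hw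
    rw [Finset.mem_filter] at hw ⊢
    exact ⟨Finset.mem_univ _, by rw [← cont_eq_sum_blocks hgl w, hw.2]⟩
  · intro U hU
    rw [Finset.mem_filter] at hU ⊢
    refine ⟨Finset.mem_univ _, ?_⟩
    rw [cont_eq_sum_blocks hgl]
    rw [Finset.sum_congr rfl (fun b _ => congrArg cont (blk_reassemble hgl U b))]
    exact hU.2
  · intro w _
    funext i
    show w (bIdx hgl (((bIdx hgl).symm i).1, ((bIdx hgl).symm i).2)) = w i
    rw [Prod.mk.eta, Equiv.apply_symm_apply]
  · intro U _
    funext b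
    exact blk_reassemble hgl U b
  · intro w _
    exact maj_factor hgl hω w

end blocks2
end CSPaux2

namespace CSPaux2
set_option linter.unusedSectionVars false
variable {A : Type*} [LinearOrder A] [Fintype A] {n : ℕ}
open CSPaux

lemma cont_eq_ofFn (w : Fin n → A) : cont w = (List.ofFn w : Multiset A) := by
  unfold cont
  rw [Finset.sum_eq_multiset_sum]
  have h1 : Multiset.map (fun i => ({w i} : Multiset A)) Finset.univ.val
      = Multiset.map (fun a => ({a} : Multiset A)) (Multiset.map w Finset.univ.val) := by
    rw [Multiset.map_map]
    rfl
  rw [h1, Multiset.sum_map_singleton]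
  congr 1
  rw [Fin.univ_def]
  show Multiset.map w (List.finRange n : Multiset (Fin n)) = _
  rw [Multiset.map_coe, ← List.ofFn_eq_map]

lemma monotone_eq_of_cont_eq {v w : Fin n → A} (hv : Monotone v) (hw : Monotone w)
    (h : cont v = cont w) : v = w := by
  rw [cont_eq_ofFn, cont_eq_ofFn, Multiset.coe_eq_coe] at h
  exact List.ofFn_injective (List.Perm.eq_of_sortedLE hv.sortedLE_ofFn hw.sortedLE_ofFn h)

lemma exists_comp_of_cont_eq (v w : Fin n → A) (h : cont v = cont w) :
    ∃ σ : Equiv.Perm (Fin n), v = fun i => w (σ i) := by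
  have hv : Monotone (v ∘ Tuple.sort v) := Tuple.monotone_sort v
  have hw : Monotone (w ∘ Tuple.sort w) := Tuple.monotone_sort w
  have hc : cont (v ∘ Tuple.sort v) = cont (w ∘ Tuple.sort w) := by
    have h1 : cont (v ∘ Tuple.sort v) = cont v := cont_comp_equiv v (Tuple.sort v)
    have h2 : cont (w ∘ Tuple.sort w) = cont w := cont_comp_equiv w (Tuple.sort w)
    rw [h1, h2, h]
  have heq : v ∘ Tuple.sort v = w ∘ Tuple.sort w := monotone_eq_of_cont_eq hv hw hc
  refine ⟨(Tuple.sort v).symm.trans (Tuple.sort w), ?_⟩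
  funext i
  have := congrFun heq ((Tuple.sort v).symm i)
  simpa using this

lemma cont_const (ℓ : ℕ) (x : A) :
    cont (fun _ : Fin ℓ => x) = ℓ • ({x} : Multiset A) := by
  unfold cont
  rw [Finset.sum_const, Finset.card_univ, Fintype.card_fin]

end CSPaux2

namespace CSPaux2
set_option linter.unusedSectionVars false
variable {A : Type*} [LinearOrder A] [Fintype A] {n : ℕ}
open CSPaux

lemma lemmaB_fiber {ℓ : ℕ} (hℓ : 0 < ℓ) {ω : ℂ} (hprim : IsPrimitiveRoot ω ℓ)
    (μ : Multiset A) :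
    (∑ u ∈ Finset.univ.filter (fun u : Fin ℓ → A => cont u = μ), ω ^ majIdx u)
      = ∑ u ∈ Finset.univ.filter (fun u : Fin ℓ → A => cont u = μ),
          (if IsConst u then (1 : ℂ) else 0) := by
  rw [lemmaB hℓ hprim _ (fun u hu => by
    rw [Finset.mem_filter] at hu ⊢
    exact ⟨Finset.mem_univ _, by rw [cont_cshift hℓ, hu.2]⟩)]
  rw [Finset.sum_boole]

/-- the per-class sum over tuples of constants, counted by `Fin g → A`. -/
lemma const_tuple_count {g ℓ : ℕ} (hℓ : 0 < ℓ) (m : Multiset A) :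
    (∑ U ∈ Finset.univ.filter
        (fun U : Fin g → (Fin ℓ → A) => (∑ b, cont (U b)) = m),
        ∏ b, (if IsConst (U b) then (1 : ℂ) else 0))
      = ((Finset.univ.filter (fun a : Fin g → A => ℓ • cont a = m)).card : ℂ) := by
  have h1 : ∀ U : Fin g → (Fin ℓ → A),
      (∏ b, (if IsConst (U b) then (1 : ℂ) else 0))
        = if (∀ b, IsConst (U b)) then (1 : ℂ) else 0 := fun U => by
    by_cases h : ∀ b, IsConst (U b)
    · rw [if_pos h]
      exact Finset.prod_eq_one fun b _ => if_pos (h b)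
    · rw [if_neg h]
      push_neg at h
      obtain ⟨b, hb⟩ := h
      exact Finset.prod_eq_zero (Finset.mem_univ b) (if_neg hb)
  rw [Finset.sum_congr rfl (fun U _ => h1 U), Finset.sum_boole, Finset.filter_filter]
  congr 1
  apply Finset.card_nbij' (i := fun U => fun b => U b ⟨0, hℓ⟩)
    (j := fun a => fun b => fun _ => a b)
  · intro U hU
    rw [Finset.mem_coe, Finset.mem_filter] at hU ⊢
    obtain ⟨-, hsum, hconst⟩ := hU
    refine ⟨Finset.mem_univ _, ?_⟩
    have hUb : ∀ b, cont (U b) = ℓ • ({U b ⟨0, hℓ⟩} : Multiset A) := by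
      intro b
      have : U b = fun _ => U b ⟨0, hℓ⟩ := funext fun r => hconst b r ⟨0, hℓ⟩
      rw [this, cont_const]
    rw [← hsum, Finset.sum_congr rfl (fun b _ => hUb b)]
    unfold cont
    rw [Finset.smul_sum]
  · intro a ha
    rw [Finset.mem_coe, Finset.mem_filter] at ha ⊢
    refine ⟨Finset.mem_univ _, ?_, fun b i j => rfl⟩
    rw [Finset.sum_congr rfl (fun b (_ : b ∈ Finset.univ) => cont_const ℓ (a b))]
    rw [← ha.2]
    unfold cont
    rw [Finset.smul_sum]
  · intro U hU
    rw [Finset.mem_coe, Finset.mem_filter] at hU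
    funext b r
    exact (hU.2.2 b ⟨0, hℓ⟩ r)
  · intro a _
    rfl

end CSPaux2


namespace CSPaux2
set_option linter.unusedSectionVars false
variable {A : Type*} [LinearOrder A] [Fintype A] {n : ℕ}
open CSPaux

/-- expansion of a `g`-periodic pattern -/
def expand {g : ℕ} (hgpos : 0 < g) (a : Fin g → A) : Fin n → A :=
  fun i => a ⟨(i : ℕ) % g, Nat.mod_lt _ hgpos⟩

lemma expand_fixed {d g : ℕ} (hgpos : 0 < g) (hgn : g ∣ n) (hgd : g ∣ d) (a : Fin g → A) :
    cshift^[d] (expand (n := n) hgpos a) = expand hgpos a := by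
  funext i
  rw [cshift_iterate]
  show a _ = a _
  congr 1
  ext
  show ((i : ℕ) + d) % n % g = (i : ℕ) % g
  obtain ⟨e, rfl⟩ := hgd
  rw [Nat.mod_mod_of_dvd _ hgn, Nat.add_mul_mod_self_left]

lemma fixed_apply_mod {d g : ℕ} (hpos : 0 < n) (hgpos : 0 < g) (hgn : g ∣ n)
    (w : Fin n → A) (hw : cshift^[d] w = w)
    (ht : ∃ t : ℕ, (t * d) % n = g % n) (i : Fin n) :
    w i = w ⟨(i : ℕ) % g, lt_of_lt_of_le (Nat.mod_lt _ hgpos) (Nat.le_of_dvd hpos hgn)⟩ := by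
  obtain ⟨t, ht⟩ := ht
  have hstep : ∀ k : ℕ, wv hpos w (k + d) = wv hpos w k := by
    intro k
    have h1 := congrFun hw ⟨k % n, Nat.mod_lt _ hpos⟩
    rw [cshift_iterate] at h1
    calc wv hpos w (k + d) = wv hpos w (k % n + d) := (wv_mod_add hpos w k d).symm
      _ = wv hpos w k := h1
  have hstep2 : ∀ s k : ℕ, wv hpos w (k + s * d) = wv hpos w k := by
    intro s
    induction s with
    | zero => intro k; rw [Nat.zero_mul, Nat.add_zero]
    | succ s ih =>
        intro k
        have h : k + (s + 1) * d = (k + s * d) + d := by ring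
        rw [h, hstep, ih]
  have hmodadd : ∀ k x : ℕ, wv hpos w (k + x % n) = wv hpos w (k + x) := by
    intro k x
    unfold wv
    congr 2
    rw [Nat.add_mod, Nat.mod_mod_of_dvd _ dvd_rfl, ← Nat.add_mod]
  have hg : ∀ k : ℕ, wv hpos w (k + g) = wv hpos w k := by
    intro k
    calc wv hpos w (k + g) = wv hpos w (k + g % n) := (hmodadd k g).symm
      _ = wv hpos w (k + (t * d) % n) := by rw [ht]
      _ = wv hpos w (k + t * d) := hmodadd k (t * d)
      _ = wv hpos w k := hstep2 t k
  have hmain : ∀ k : ℕ, wv hpos w k = wv hpos w (k % g) := by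
    intro k
    induction k using Nat.strong_induction_on with
    | _ k ih =>
        rcases Nat.lt_or_ge k g with hk | hk
        · rw [Nat.mod_eq_of_lt hk]
        · have hkg : k - g + g = k := by omega
          have h2 : (k - g) % g = k % g := by
            conv_rhs => rw [← hkg]
            rw [Nat.add_mod_right]
          calc wv hpos w k = wv hpos w ((k - g) + g) := by rw [hkg]
            _ = wv hpos w (k - g) := hg (k - g)
            _ = wv hpos w ((k - g) % g) := ih (k - g) (by omega)
            _ = wv hpos w (k % g) := by rw [h2]
  have h1 : w i = wv hpos w (i : ℕ) := wv_eq hpos w i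
  rw [h1, hmain]
  unfold wv
  congr 1
  ext
  show (i : ℕ) % g % n = (i : ℕ) % g
  exact Nat.mod_eq_of_lt (lt_of_lt_of_le (Nat.mod_lt _ hgpos) (Nat.le_of_dvd hpos hgn))

lemma fixed_count {d g ℓ : ℕ} (hpos : 0 < n) (hgpos : 0 < g) (hgn : g ∣ n) (hgd : g ∣ d)
    (ht : ∃ t : ℕ, (t * d) % n = g % n) (hgl : g * ℓ = n) (m : Multiset A) :
    (Finset.univ.filter (fun w : Fin n → A => cont w = m ∧ cshift^[d] w = w)).card
      = (Finset.univ.filter (fun a : Fin g → A => ℓ • cont a = m)).card := by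
  have hcont_expand : ∀ a : Fin g → A, cont (expand (n := n) hgpos a) = ℓ • cont a := by
    intro a
    unfold cont expand
    rw [← Equiv.sum_comp (bIdx (mul_comm g ℓ ▸ hgl) : Fin ℓ × Fin g ≃ Fin n)
      (fun i : Fin n => ({a ⟨(i : ℕ) % g, Nat.mod_lt _ hgpos⟩} : Multiset A)),
      Fintype.sum_prod_type]
    rw [Finset.smul_sum]
    rw [Finset.sum_congr rfl (fun t (_ : t ∈ Finset.univ) => Finset.sum_congr rfl
      (fun r (_ : r ∈ Finset.univ) => by
        show ({a ⟨((bIdx (mul_comm g ℓ ▸ hgl) (t, r) : Fin n) : ℕ) % g, _⟩} : Multiset A) = {a r}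
        congr 2
        ext
        rw [bIdx_val]
        show ((r : ℕ) + g * (t : ℕ)) % g = (r : ℕ)
        rw [Nat.add_mul_mod_self_left, Nat.mod_eq_of_lt r.isLt]))]
    rw [Finset.sum_const, Finset.card_univ, Fintype.card_fin, Finset.smul_sum]
  apply Finset.card_nbij'
    (i := fun w => fun r : Fin g => w ⟨(r : ℕ), lt_of_lt_of_le r.isLt (Nat.le_of_dvd hpos hgn)⟩)
    (j := fun a => expand hgpos a)
  · intro w hw
    rw [Finset.mem_coe, Finset.mem_filter] at hw ⊢
    obtain ⟨-, hcont, hfix⟩ := hw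
    refine ⟨Finset.mem_univ _, ?_⟩
    have hwe : w = expand hgpos
        (fun r : Fin g => w ⟨(r : ℕ), lt_of_lt_of_le r.isLt (Nat.le_of_dvd hpos hgn)⟩) := by
      funext i
      rw [fixed_apply_mod hpos hgpos hgn w hfix ht i]
      rfl
    rw [← hcont]
    conv_rhs => rw [hwe]
    rw [hcont_expand]
  · intro a ha
    rw [Finset.mem_coe, Finset.mem_filter] at ha ⊢
    exact ⟨Finset.mem_univ _, by rw [hcont_expand a]; exact ha.2,
      expand_fixed hgpos hgn hgd a⟩
  · intro w hw
    rw [Finset.mem_coe, Finset.mem_filter] at hw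
    funext i
    exact (fixed_apply_mod hpos hgpos hgn w hw.2.2 ht i).symm
  · intro a _
    funext r
    show a ⟨(r : ℕ) % g, _⟩ = a r
    congr 1
    ext
    exact Nat.mod_eq_of_lt r.isLt

lemma bezout_exists (hpos : 0 < n) (d : ℕ) :
    ∃ t : ℕ, (t * d) % n = Nat.gcd n d % n := by
  have hB := Nat.gcd_eq_gcd_ab n d
  set B : ℤ := Nat.gcdB n d
  set A' : ℤ := Nat.gcdA n d
  have hn0 : (n : ℤ) ≠ 0 := by exact_mod_cast hpos.ne'
  refine ⟨(B % (n : ℤ)).toNat, ?_⟩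
  have hnonneg : 0 ≤ B % (n : ℤ) := Int.emod_nonneg B hn0
  have htB : ((B % (n : ℤ)).toNat : ℤ) = B % n := Int.toNat_of_nonneg hnonneg
  have key : (((B % (n : ℤ)).toNat * d : ℕ) : ℤ) % n = ((Nat.gcd n d : ℕ) : ℤ) % n := by
    push_cast
    rw [htB]
    have h2 : (B % (n : ℤ)) * d % n = B * d % n := by
      rw [Int.mul_emod, Int.emod_emod_of_dvd B dvd_rfl, ← Int.mul_emod]
    rw [h2]
    have h4 : B * (d : ℤ) = (Nat.gcd n d : ℤ) + (n : ℤ) * (-A') := by rw [hB]; ring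
    rw [h4, Int.add_mul_emod_self_left]
  exact_mod_cast key

end CSPaux2

namespace CSPaux2
set_option linter.unusedSectionVars false
variable {A : Type*} [LinearOrder A] [Fintype A] {n : ℕ}
open CSPaux

theorem class_csp (hpos : 0 < n) {ζ : ℂ} (hζ : IsPrimitiveRoot ζ n) (d : ℕ) (m : Multiset A) :
    ((Finset.univ.filter (fun w : Fin n → A => cont w = m ∧ cshift^[d] w = w)).card : ℂ)
      = ∑ w ∈ Finset.univ.filter (fun w : Fin n → A => cont w = m), ζ ^ (d * majIdx w) := by
  set g : ℕ := Nat.gcd n d with hgdef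
  set ℓ : ℕ := n / g with hldef
  have hgpos : 0 < g := Nat.gcd_pos_of_pos_left d hpos
  have hgn : g ∣ n := Nat.gcd_dvd_left n d
  have hgd : g ∣ d := Nat.gcd_dvd_right n d
  have hgl : g * ℓ = n := Nat.mul_div_cancel' hgn
  have hlpos : 0 < ℓ := by
    rcases Nat.eq_zero_or_pos ℓ with h | h
    · rw [h, Nat.mul_zero] at hgl; omega
    · exact h
  obtain ⟨e, hde⟩ := hgd
  set ω : ℂ := ζ ^ d with hwdef
  have hω : ω ^ ℓ = 1 := by
    rw [hwdef, ← pow_mul, hde]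
    have : g * e * ℓ = (g * ℓ) * e := by ring
    rw [this, hgl, pow_mul, hζ.pow_eq_one, one_pow]
  have hprim : IsPrimitiveRoot ω ℓ := by
    refine ⟨hω, ?_⟩
    intro l hl
    rw [hwdef, ← pow_mul] at hl
    have hn_dvd : n ∣ d * l := hζ.dvd_of_pow_eq_one _ hl
    rw [← hgl, hde] at hn_dvd
    have h2 : g * ℓ ∣ g * (e * l) := by
      rw [← mul_assoc]; exact hn_dvd
    have h3 : ℓ ∣ e * l := (mul_dvd_mul_iff_left (by omega : g ≠ 0)).mp h2
    have hcop : Nat.Coprime ℓ e := by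
      have := Nat.coprime_div_gcd_div_gcd (m := n) (n := d) hgpos
      rw [← hgdef, ← hldef] at this
      have he : d / g = e := by rw [hde]; exact Nat.mul_div_cancel_left e hgpos
      rw [← he]
      exact this
    exact (Nat.Coprime.dvd_of_dvd_mul_left hcop h3)
  have hB := bezout_exists hpos d
  rw [fixed_count hpos hgpos hgn ⟨e, hde⟩ hB hgl m]
  have hstep1 : ∀ w : Fin n → A, ζ ^ (d * majIdx w) = ω ^ majIdx w := by
    intro w
    rw [hwdef, ← pow_mul]
  rw [Finset.sum_congr rfl (fun w _ => hstep1 w)]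
  rw [class_sum_eq_tuple_sum hgl hω m]
  have hrepl := tuple_sum_replace (W := Fin ℓ → A) (M := Multiset A) cont
    (fun u => ω ^ majIdx u) (fun u => if IsConst u then (1 : ℂ) else 0)
    (fun μ => lemmaB_fiber hlpos hprim μ) g 0 m
  simp only [zero_add] at hrepl
  rw [hrepl, const_tuple_count hlpos m]

end CSPaux2

open CSPaux CSPaux2 in
theorem stmt0' {A : Type*} [Fintype A] [LinearOrder A] {n : ℕ} (hn : 1 ≤ n)
    (X : Finset (Fin n → A))
    (hX : ∀ σ : Equiv.Perm (Fin n), ∀ w ∈ X, (fun i => w (σ i)) ∈ X) :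
    exhibitsCSP X majIdx := by
  intro d
  have hpos : 0 < n := hn
  have hζ : IsPrimitiveRoot (Complex.exp (2 * (Real.pi : ℂ) * Complex.I / n)) n :=
    Complex.isPrimitiveRoot_exp n (by omega)
  set ζ : ℂ := Complex.exp (2 * (Real.pi : ℂ) * Complex.I / n) with hzdef
  classical
  set M : Finset (Multiset A) := X.image cont with hM
  have hXsplit : X = M.biUnion (fun m => Finset.univ.filter (fun w : Fin n → A => cont w = m)) := by
    ext w
    constructor
    · intro hw
      rw [Finset.mem_biUnion]
      exact ⟨cont w, Finset.mem_image_of_mem cont hw,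
        Finset.mem_filter.mpr ⟨Finset.mem_univ _, rfl⟩⟩
    · intro hw
      rw [Finset.mem_biUnion] at hw
      obtain ⟨m, hm, hwm⟩ := hw
      rw [hM, Finset.mem_image] at hm
      obtain ⟨w₀, hw₀, hcw₀⟩ := hm
      have hcc : cont w = cont w₀ := by
        rw [(Finset.mem_filter.mp hwm).2, hcw₀]
      obtain ⟨σ, hσ⟩ := exists_comp_of_cont_eq w w₀ hcc
      rw [hσ]
      exact hX σ w₀ hw₀
  have hdisj : ∀ m₁ ∈ M, ∀ m₂ ∈ M, m₁ ≠ m₂ →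
      Disjoint (Finset.univ.filter (fun w : Fin n → A => cont w = m₁))
        (Finset.univ.filter (fun w : Fin n → A => cont w = m₂)) := by
    intro m₁ _ m₂ _ hne
    rw [Finset.disjoint_left]
    intro w h1 h2
    rw [Finset.mem_filter] at h1 h2
    exact hne (h1.2 ▸ h2.2 ▸ rfl)
  -- LHS
  have hLHS : (X.filter fun v => cshift^[d] v = v).card
      = ∑ m ∈ M, (Finset.univ.filter
          (fun w : Fin n → A => cont w = m ∧ cshift^[d] w = w)).card := by
    conv_lhs => rw [hXsplit]
    rw [Finset.filter_biUnion]
    rw [Finset.card_biUnion (fun m₁ h₁ m₂ h₂ hne =>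
      Finset.disjoint_filter_filter (hdisj m₁ h₁ m₂ h₂ hne))]
    apply Finset.sum_congr rfl
    intro m _
    rw [Finset.filter_filter]
  -- RHS
  have hRHS : (∑ v ∈ X, ζ ^ (d * majIdx v))
      = ∑ m ∈ M, ∑ w ∈ Finset.univ.filter (fun w : Fin n → A => cont w = m),
          ζ ^ (d * majIdx w) := by
    conv_lhs => rw [hXsplit]
    exact Finset.sum_biUnion hdisj
  rw [hLHS, hRHS, Nat.cast_sum]
  exact Finset.sum_congr rfl fun m _ => class_csp hpos hζ d m

/-- If X ⊆ A^n (with A a finite linearly ordered alphabet, n ≥ 1)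
is stable under the symmetric group acting on positions, then (X, X^maj(t), C)
exhibits the cyclic sieving phenomenon. -/
theorem stmt0 {A : Type*} [Fintype A] [LinearOrder A] {n : ℕ} (hn : 1 ≤ n)
    (X : Finset (Fin n → A))
    (hX : ∀ σ : Equiv.Perm (Fin n), ∀ w ∈ X, (fun i => w (σ i)) ∈ X) :
    exhibitsCSP X majIdx :=
  stmt0' hn X hX
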